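/- Any subset A of the Hamming cube {0,1}^d whose Hamming diameter is at most 2t+1, where 2t+1 ≤ d-1, has cardinality at most C(d-1,t) + ∑_{i=0}^{t} C(d,i). (Kleitman's theorem, odd diameter case.) -/

import Mathlib

open Finset

/-- Kleitman bound function. `a` is the global "diameter" parameter, `ℓ` the level. -/
def Kb (n a ℓ : ℕ) : ℕ :=
  if a < 2*ℓ then 0 else
  if n ≤ a - 2*ℓ then 2^n
  else if (a - 2*ℓ) % 2 = 0 then ∑ i ∈ range ((a-2*ℓ)/2 + 1), n.choose i
  else 2 * ∑ i ∈ range ((a-2*ℓ)/2 + 1), (n-1).choose i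

lemma Kb_eval_neg {n a ℓ : ℕ} (h : a < 2*ℓ) : Kb n a ℓ = 0 := by
  unfold Kb; rw [if_pos h]

lemma Kb_trivial {n a ℓ : ℕ} (h : 2*ℓ + n ≤ a) : Kb n a ℓ = 2^n := by
  unfold Kb; rw [if_neg (by omega), if_pos (by omega)]

lemma Kb_eval_even {n a ℓ : ℕ} (h1 : 2*ℓ ≤ a) (h2 : a - 2*ℓ < n) (hm : (a - 2*ℓ) % 2 = 0) :
    Kb n a ℓ = ∑ i ∈ range ((a-2*ℓ)/2 + 1), n.choose i := by
  unfold Kb; rw [if_neg (by omega), if_neg (by omega), if_pos hm]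

lemma Kb_eval_odd {n a ℓ : ℕ} (h1 : 2*ℓ ≤ a) (h2 : a - 2*ℓ < n) (hm : (a - 2*ℓ) % 2 = 1) :
    Kb n a ℓ = 2 * ∑ i ∈ range ((a-2*ℓ)/2 + 1), (n-1).choose i := by
  unfold Kb; rw [if_neg (by omega), if_neg (by omega), if_neg (by omega)]

lemma sum_choose_succ (n r : ℕ) :
    ∑ i ∈ range (r+1), (n+1).choose i
      = ∑ i ∈ range (r+1), n.choose i + ∑ i ∈ range r, n.choose i := by
  rw [Finset.sum_range_succ' (f := fun i => (n+1).choose i),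
    Finset.sum_range_succ' (f := fun i => n.choose i)]
  simp only [Nat.choose_succ_succ, Nat.choose_zero_right]
  rw [Finset.sum_add_distrib]
  ring

/-- Pascal recursion for Kb in the nontrivial regime. -/
lemma Kb_pascal {n a ℓ : ℕ} (h : a + 2 ≤ 2*ℓ + n) :
    Kb n a ℓ = Kb (n-1) a ℓ + Kb (n-1) a (ℓ+1) := by
  rcases le_or_gt (2*ℓ) a with hla | hla
  · rcases Nat.lt_or_ge a (2*(ℓ+1)) with h2 | h2
    · -- b ≤ 1
      have hz : Kb (n-1) a (ℓ+1) = 0 := Kb_eval_neg h2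
      rw [hz]
      rcases Nat.eq_or_lt_of_le (show a - 2*ℓ ≤ 1 by omega) with hb1 | hb0
      · replace hb1 : a - 2*ℓ = 1 := by omega
        rw [Kb_eval_odd hla (by omega) (by omega), Kb_eval_odd hla (by omega) (by omega), hb1]
        norm_num
      · replace hb0 : a - 2*ℓ = 0 := by omega
        rw [Kb_eval_even hla (by omega) (by omega), Kb_eval_even hla (by omega) (by omega), hb0]
        norm_num
    · -- b ≥ 2
      have hbb : a - 2*(ℓ+1) = (a - 2*ℓ) - 2 := by omega
      have hq : (a - 2*(ℓ+1))/2 = (a-2*ℓ)/2 - 1 := by omega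
      have hq1 : (a-2*ℓ)/2 - 1 + 1 = (a-2*ℓ)/2 := by omega
      rcases Nat.even_or_odd (a - 2*ℓ) with he | ho
      · have hm : (a-2*ℓ) % 2 = 0 := Nat.even_iff.mp he
        rw [Kb_eval_even hla (by omega) hm, Kb_eval_even hla (by omega) hm,
          Kb_eval_even (by omega) (by omega) (by omega), hq, hq1]
        have h5 := sum_choose_succ (n-1) ((a-2*ℓ)/2)
        have hn1 : n - 1 + 1 = n := by omega
        rw [hn1] at h5
        exact h5
      · have hm : (a-2*ℓ) % 2 = 1 := Nat.odd_iff.mp ho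
        rw [Kb_eval_odd hla (by omega) hm, Kb_eval_odd hla (by omega) hm,
          Kb_eval_odd (by omega) (by omega) (by omega), hq, hq1]
        have h5 := sum_choose_succ (n-1-1) ((a-2*ℓ)/2)
        have hn2 : n - 1 - 1 + 1 = n - 1 := by omega
        rw [hn2] at h5
        rw [h5, mul_add]
  · rw [Kb_eval_neg hla, Kb_eval_neg hla, Kb_eval_neg (by omega)]

/-- boundary: b = n-1 gives 2^(n-1) -/
lemma Kb_boundary {n a ℓ : ℕ} (hn : 1 ≤ n) (h : 2*ℓ + n = a + 1) :
    Kb n a ℓ = 2^(n-1) := by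
  have hb : a - 2*ℓ = n - 1 := by omega
  rcases Nat.even_or_odd (n-1) with he | ho
  · obtain ⟨r, hr⟩ := he
    have hrr : (a-2*ℓ)/2 = r := by omega
    rw [Kb_eval_even (by omega) (by omega) (by omega), hrr]
    have hn' : n = 2*r + 1 := by omega
    rw [hn', Nat.sum_range_choose_halfway r]
    have h9 : (2*r+1) - 1 = 2*r := by omega
    rw [h9, pow_mul]
    norm_num
  · obtain ⟨r, hr⟩ := ho
    have hrr : (a-2*ℓ)/2 = r := by omega
    rw [Kb_eval_odd (by omega) (by omega) (by omega), hrr]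
    have hn1 : n - 1 = 2*r + 1 := by omega
    rw [hn1, Nat.sum_range_choose_halfway r]
    have : (2:ℕ) * 4^r = 2^(2*r+1) := by
      rw [pow_succ, pow_mul]; norm_num [mul_comm]
    rw [this]

/-- the final value -/
lemma Kb_final {d t : ℕ} (ht : 2*t + 1 ≤ d - 1) (hd : 1 ≤ d) :
    Kb d (2*t+1) 0 = (d-1).choose t + ∑ i ∈ range (t+1), d.choose i := by
  rw [Kb_eval_odd (by omega) (by omega) (by omega)]
  have hq : (2*t+1 - 2*0)/2 = t := by omega
  rw [hq]
  have hd1 : d - 1 + 1 = d := by omega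
  have h5 := sum_choose_succ (d-1) t
  rw [hd1] at h5
  rw [h5]
  have hsplit : ∑ i ∈ range (t+1), (d-1).choose i
      = ∑ i ∈ range t, (d-1).choose i + (d-1).choose t := by
    rw [Finset.sum_range_succ]
  omega
/-- distance = size of symmetric difference -/
def sdC (F G : Finset ℕ) : ℕ := (symmDiff F G).card

lemma sdC_comm (F G : Finset ℕ) : sdC F G = sdC G F := by
  unfold sdC; rw [symmDiff_comm]

lemma sdC_disjoint {F G : Finset ℕ} (h : Disjoint F G) : sdC F G = F.card + G.card := by
  unfold sdC
  rw [h.symmDiff_eq_sup]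
  exact Finset.card_union_of_disjoint h

lemma sd_insert_mem {a : ℕ} {F Q : Finset ℕ} (ha : a ∉ F) (hq : a ∈ Q) :
    sdC (insert a F) Q + 1 = sdC F Q := by
  unfold sdC
  have h1 : symmDiff (insert a F) Q = (symmDiff F Q).erase a := by
    ext x
    by_cases hx : x = a <;>
      simp [Finset.mem_symmDiff, Finset.mem_erase, hx, ha, hq] <;> tauto
  have h2 : a ∈ symmDiff F Q := by simp [Finset.mem_symmDiff, ha, hq]
  have h3 : 1 ≤ (symmDiff F Q).card := Finset.card_pos.mpr ⟨a, h2⟩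
  rw [h1, Finset.card_erase_of_mem h2]
  omega

lemma sd_insert_not {a : ℕ} {F Q : Finset ℕ} (ha : a ∉ F) (hq : a ∉ Q) :
    sdC (insert a F) Q = sdC F Q + 1 := by
  unfold sdC
  have h1 : symmDiff (insert a F) Q = insert a (symmDiff F Q) := by
    ext x
    by_cases hx : x = a <;>
      simp [Finset.mem_symmDiff, hx, ha, hq] <;> tauto
  have h2 : a ∉ symmDiff F Q := by simp [Finset.mem_symmDiff, ha, hq]
  rw [h1, Finset.card_insert_of_notMem h2]

lemma sd_erase_mem {a : ℕ} {F Q : Finset ℕ} (ha : a ∈ F) (hq : a ∈ Q) :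
    sdC (F.erase a) Q = sdC F Q + 1 := by
  unfold sdC
  have h1 : symmDiff (F.erase a) Q = insert a (symmDiff F Q) := by
    ext x
    by_cases hx : x = a <;>
      simp [Finset.mem_symmDiff, Finset.mem_erase, hx, ha, hq] <;> tauto
  have h2 : a ∉ symmDiff F Q := by simp [Finset.mem_symmDiff, ha, hq]
  rw [h1, Finset.card_insert_of_notMem h2]

lemma sd_erase_not {a : ℕ} {F Q : Finset ℕ} (ha : a ∈ F) (hq : a ∉ Q) :
    sdC (F.erase a) Q + 1 = sdC F Q := by
  unfold sdC
  have h1 : symmDiff (F.erase a) Q = (symmDiff F Q).erase a := by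
    ext x
    by_cases hx : x = a <;>
      simp [Finset.mem_symmDiff, Finset.mem_erase, hx, ha, hq] <;> tauto
  have h2 : a ∈ symmDiff F Q := by simp [Finset.mem_symmDiff, ha, hq]
  have h3 : 1 ≤ (symmDiff F Q).card := Finset.card_pos.mpr ⟨a, h2⟩
  rw [h1, Finset.card_erase_of_mem h2]
  omega

/-! ### Compression operations -/

/-- shift map: replace `j` by `i` -/
def sft (i j : ℕ) (F : Finset ℕ) : Finset ℕ := insert i (F.erase j)

/-- the family-level left-shift operation -/
def Sop (i j : ℕ) (𝒜 : Finset (Finset ℕ)) : Finset (Finset ℕ) :=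
  ((𝒜.filter fun F => j ∈ F ∧ i ∉ F ∧ sft i j F ∉ 𝒜).image (sft i j)) ∪
    (𝒜.filter fun F => ¬(j ∈ F ∧ i ∉ F ∧ sft i j F ∉ 𝒜))

/-- the family-level monotone (deletion) compression -/
def Mop (j : ℕ) (𝒜 : Finset (Finset ℕ)) : Finset (Finset ℕ) :=
  ((𝒜.filter fun F => j ∈ F ∧ F.erase j ∉ 𝒜).image (fun F => F.erase j)) ∪
    (𝒜.filter fun F => ¬(j ∈ F ∧ F.erase j ∉ 𝒜))

lemma sft_inj {i j : ℕ} (hij : i ≠ j) {F G : Finset ℕ}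
    (hF : j ∈ F ∧ i ∉ F) (hG : j ∈ G ∧ i ∉ G) (h : sft i j F = sft i j G) : F = G := by
  have : insert j ((sft i j F).erase i) = insert j ((sft i j G).erase i) := by rw [h]
  have eF : insert j ((sft i j F).erase i) = F := by
    unfold sft
    rw [Finset.erase_insert (fun hm => hF.2 (Finset.mem_of_mem_erase hm))]
    rw [Finset.insert_erase hF.1]
  have eG : insert j ((sft i j G).erase i) = G := by
    unfold sft
    rw [Finset.erase_insert (fun hm => hG.2 (Finset.mem_of_mem_erase hm))]
    rw [Finset.insert_erase hG.1]
  rw [eF, eG] at this; exact this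

lemma erase_inj_on {j : ℕ} {F G : Finset ℕ} (hF : j ∈ F) (hG : j ∈ G)
    (h : F.erase j = G.erase j) : F = G := by
  have : insert j (F.erase j) = insert j (G.erase j) := by rw [h]
  rwa [Finset.insert_erase hF, Finset.insert_erase hG] at this

lemma Sop_card {i j : ℕ} (hij : i ≠ j) (𝒜 : Finset (Finset ℕ)) :
    (Sop i j 𝒜).card = 𝒜.card := by
  unfold Sop
  rw [Finset.card_union_of_disjoint, Finset.card_image_of_injOn]
  · rw [← Finset.card_union_of_disjoint (Finset.disjoint_filter_filter_not 𝒜 𝒜 _),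
      Finset.filter_union_filter_not_eq]
  · intro F hF G hG h
    simp only [Finset.mem_coe, Finset.mem_filter] at hF hG
    exact sft_inj hij ⟨hF.2.1, hF.2.2.1⟩ ⟨hG.2.1, hG.2.2.1⟩ h
  · -- images are not in 𝒜, second part is in 𝒜
    rw [Finset.disjoint_left]
    intro P hP hP'
    simp only [Finset.mem_image, Finset.mem_filter] at hP hP'
    obtain ⟨F, hF, rfl⟩ := hP
    exact hF.2.2.2 hP'.1

lemma Mop_card (j : ℕ) (𝒜 : Finset (Finset ℕ)) : (Mop j 𝒜).card = 𝒜.card := by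
  unfold Mop
  rw [Finset.card_union_of_disjoint, Finset.card_image_of_injOn]
  · rw [← Finset.card_union_of_disjoint (Finset.disjoint_filter_filter_not 𝒜 𝒜 _),
      Finset.filter_union_filter_not_eq]
  · intro F hF G hG h
    simp only [Finset.mem_coe, Finset.mem_filter] at hF hG
    exact erase_inj_on hF.2.1 hG.2.1 h
  · rw [Finset.disjoint_left]
    intro P hP hP'
    simp only [Finset.mem_image, Finset.mem_filter] at hP hP'
    obtain ⟨F, hF, rfl⟩ := hP
    exact hF.2.2 hP'.1

/-- diameter bound predicate -/
def diamLE (s : ℕ) (𝒜 : Finset (Finset ℕ)) : Prop := ∀ F ∈ 𝒜, ∀ G ∈ 𝒜, sdC F G ≤ s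

lemma Mop_aux {j s : ℕ} {𝒜 : Finset (Finset ℕ)} (h : diamLE s 𝒜)
    {F : Finset ℕ} (hF𝒜 : F ∈ 𝒜) (hFj : j ∈ F)
    {Q : Finset ℕ} (hQ𝒜 : Q ∈ 𝒜) (hQk : j ∈ Q → Q.erase j ∈ 𝒜) :
    sdC (F.erase j) Q ≤ s := by
  by_cases hjQ : j ∈ Q
  · have h1 : sdC (F.erase j) Q = sdC F Q + 1 := sd_erase_mem hFj hjQ
    have h2 : sdC (Q.erase j) F = sdC Q F + 1 := sd_erase_mem hjQ hFj
    have h3 := h F hF𝒜 (Q.erase j) (hQk hjQ)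
    rw [sdC_comm F (Q.erase j)] at h3
    rw [sdC_comm Q F] at h2
    omega
  · have h1 : sdC (F.erase j) Q + 1 = sdC F Q := sd_erase_not hFj hjQ
    have h2 := h F hF𝒜 Q hQ𝒜
    omega

lemma Mop_diam {j s : ℕ} {𝒜 : Finset (Finset ℕ)} (h : diamLE s 𝒜) :
    diamLE s (Mop j 𝒜) := by
  intro P hP Q hQ
  unfold Mop at hP hQ
  simp only [Finset.mem_union, Finset.mem_image, Finset.mem_filter] at hP hQ
  have keep : ∀ R : Finset ℕ, R ∈ 𝒜 ∧ ¬(j ∈ R ∧ R.erase j ∉ 𝒜) →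
      R ∈ 𝒜 ∧ (j ∈ R → R.erase j ∈ 𝒜) := by
    intro R hR
    refine ⟨hR.1, fun hj => ?_⟩
    by_contra hcon
    exact hR.2 ⟨hj, hcon⟩
  rcases hP with ⟨F, hF, rfl⟩ | hPk
  · rcases hQ with ⟨G, hG, rfl⟩ | hQk
    · -- both moved
      have h1 : sdC (F.erase j) (G.erase j) + 1 = sdC F (G.erase j) :=
        sd_erase_not hF.2.1 (Finset.notMem_erase j G)
      have h2 : sdC (G.erase j) F = sdC G F + 1 := sd_erase_mem hG.2.1 hF.2.1
      have h3 := h F hF.1 G hG.1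
      rw [sdC_comm F (G.erase j)] at h1
      rw [sdC_comm G F] at h2
      omega
    · have := keep Q hQk
      exact Mop_aux h hF.1 hF.2.1 this.1 this.2
  · rcases hQ with ⟨G, hG, rfl⟩ | hQk
    · have := keep P hPk
      rw [sdC_comm]
      exact Mop_aux h hG.1 hG.2.1 this.1 this.2
    · exact h P hPk.1 Q hQk.1

lemma Sop_aux {i j s : ℕ} {𝒜 : Finset (Finset ℕ)} (h : diamLE s 𝒜)
    {F : Finset ℕ} (hF𝒜 : F ∈ 𝒜) (hFj : j ∈ F) (hFi : i ∉ F)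
    {Q : Finset ℕ} (hQ𝒜 : Q ∈ 𝒜) (hQk : j ∈ Q → i ∉ Q → sft i j Q ∈ 𝒜) :
    sdC (sft i j F) Q ≤ s := by
  have hiF' : i ∉ F.erase j := fun hm => hFi (Finset.mem_of_mem_erase hm)
  by_cases hjQ : j ∈ Q
  · by_cases hiQ : i ∈ Q
    · -- j∈Q, i∈Q
      have h1 : sdC (sft i j F) Q + 1 = sdC (F.erase j) Q := sd_insert_mem hiF' hiQ
      have h2 : sdC (F.erase j) Q = sdC F Q + 1 := sd_erase_mem hFj hjQ
      have h3 := h F hF𝒜 Q hQ𝒜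
      omega
    · -- j∈Q, i∉Q : use σQ ∈ 𝒜
      have hσQ := hQk hjQ hiQ
      have hiQ' : i ∉ Q.erase j := fun hm => hiQ (Finset.mem_of_mem_erase hm)
      have h1 : sdC (sft i j F) Q = sdC (F.erase j) Q + 1 := sd_insert_not hiF' hiQ
      have h2 : sdC (F.erase j) Q = sdC F Q + 1 := sd_erase_mem hFj hjQ
      have h3 : sdC (sft i j Q) F = sdC (Q.erase j) F + 1 := sd_insert_not hiQ' hFi
      have h4 : sdC (Q.erase j) F = sdC Q F + 1 := sd_erase_mem hjQ hFj
      have h5 := h F hF𝒜 (sft i j Q) hσQ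
      rw [sdC_comm F (sft i j Q)] at h5
      rw [sdC_comm Q F] at h4
      omega
  · by_cases hiQ : i ∈ Q
    · have h1 : sdC (sft i j F) Q + 1 = sdC (F.erase j) Q := sd_insert_mem hiF' hiQ
      have h2 : sdC (F.erase j) Q + 1 = sdC F Q := sd_erase_not hFj hjQ
      have h3 := h F hF𝒜 Q hQ𝒜
      omega
    · have h1 : sdC (sft i j F) Q = sdC (F.erase j) Q + 1 := sd_insert_not hiF' hiQ
      have h2 : sdC (F.erase j) Q + 1 = sdC F Q := sd_erase_not hFj hjQ
      have h3 := h F hF𝒜 Q hQ𝒜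
      omega

lemma Sop_diam {i j s : ℕ} {𝒜 : Finset (Finset ℕ)} (h : diamLE s 𝒜) :
    diamLE s (Sop i j 𝒜) := by
  intro P hP Q hQ
  unfold Sop at hP hQ
  simp only [Finset.mem_union, Finset.mem_image, Finset.mem_filter] at hP hQ
  have keep : ∀ R : Finset ℕ, R ∈ 𝒜 ∧ ¬(j ∈ R ∧ i ∉ R ∧ sft i j R ∉ 𝒜) →
      R ∈ 𝒜 ∧ (j ∈ R → i ∉ R → sft i j R ∈ 𝒜) := by
    intro R hR
    refine ⟨hR.1, fun hj hi => ?_⟩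
    by_contra hcon
    exact hR.2 ⟨hj, hi, hcon⟩
  rcases hP with ⟨F, hF, rfl⟩ | hPk
  · rcases hQ with ⟨G, hG, rfl⟩ | hQk
    · -- both moved
      obtain ⟨hF𝒜, hFj, hFi, -⟩ := hF
      obtain ⟨hG𝒜, hGj, hGi, -⟩ := hG
      have hiF' : i ∉ F.erase j := fun hm => hFi (Finset.mem_of_mem_erase hm)
      have hiG' : i ∉ G.erase j := fun hm => hGi (Finset.mem_of_mem_erase hm)
      have h1 : sdC (sft i j F) (sft i j G) + 1 = sdC (F.erase j) (sft i j G) :=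
        sd_insert_mem hiF' (Finset.mem_insert_self i _)
      have h2 : sdC (sft i j G) (F.erase j) = sdC (G.erase j) (F.erase j) + 1 :=
        sd_insert_not hiG' hiF'
      have h3 : sdC (G.erase j) (F.erase j) + 1 = sdC G (F.erase j) :=
        sd_erase_not hGj (Finset.notMem_erase j F)
      have h4 : sdC (F.erase j) G = sdC F G + 1 := sd_erase_mem hFj hGj
      have h5 := h F hF𝒜 G hG𝒜
      rw [sdC_comm (F.erase j) (sft i j G)] at h1
      rw [sdC_comm G (F.erase j)] at h3
      omega
    · have := keep Q hQk
      exact Sop_aux h hF.1 hF.2.1 hF.2.2.1 this.1 this.2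
  · rcases hQ with ⟨G, hG, rfl⟩ | hQk
    · have := keep P hPk
      rw [sdC_comm]
      exact Sop_aux h hG.1 hG.2.1 hG.2.2.1 this.1 this.2
    · exact h P hPk.1 Q hQk.1

/-! ### Potential and termination -/

def wt (F : Finset ℕ) : ℕ := ∑ x ∈ F, 4^x

def pot (𝒜 : Finset (Finset ℕ)) : ℕ := ∑ F ∈ 𝒜, wt F

lemma wt_erase_lt {j : ℕ} {F : Finset ℕ} (hj : j ∈ F) : wt (F.erase j) < wt F := by
  unfold wt
  have h0 : ∑ x ∈ F.erase j, 4^x + 4^j = ∑ x ∈ F, 4^x := Finset.sum_erase_add F (fun x => 4^x) hj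
  have h4 : 0 < 4^j := Nat.pow_pos (by norm_num)
  omega

lemma wt_sft_lt {i j : ℕ} (hij : i < j) {F : Finset ℕ} (hj : j ∈ F) (hi : i ∉ F) :
    wt (sft i j F) < wt F := by
  unfold sft wt
  have hiF' : i ∉ F.erase j := fun hm => hi (Finset.mem_of_mem_erase hm)
  rw [Finset.sum_insert hiF']
  have h0 : ∑ x ∈ F.erase j, 4^x + 4^j = ∑ x ∈ F, 4^x := Finset.sum_erase_add F (fun x => 4^x) hj
  have h4 : (4:ℕ)^i < 4^j := Nat.pow_lt_pow_right (by norm_num) hij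
  omega

lemma pot_union_image {𝒜 : Finset (Finset ℕ)} {P : Finset ℕ → Prop} [DecidablePred P]
    {f : Finset ℕ → Finset ℕ}
    (hinj : Set.InjOn f (𝒜.filter P))
    (hdisj : Disjoint ((𝒜.filter P).image f) (𝒜.filter fun F => ¬ P F))
    (hlt : ∀ F ∈ 𝒜.filter P, wt (f F) < wt F)
    (hne : (𝒜.filter P).Nonempty) :
    pot (((𝒜.filter P).image f) ∪ (𝒜.filter fun F => ¬ P F)) < pot 𝒜 := by
  unfold pot
  rw [Finset.sum_union hdisj, Finset.sum_image hinj]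
  have h1 : ∑ F ∈ 𝒜.filter P, wt (f F) < ∑ F ∈ 𝒜.filter P, wt F :=
    Finset.sum_lt_sum_of_nonempty hne hlt
  have h2 : ∑ F ∈ 𝒜.filter P, wt F + ∑ F ∈ 𝒜.filter (fun F => ¬ P F), wt F = ∑ F ∈ 𝒜, wt F := by
    rw [← Finset.sum_union (Finset.disjoint_filter_filter_not 𝒜 𝒜 P),
      Finset.filter_union_filter_not_eq]
  omega

lemma Mop_pot {j : ℕ} {𝒜 : Finset (Finset ℕ)}
    (hne : (𝒜.filter fun F => j ∈ F ∧ F.erase j ∉ 𝒜).Nonempty) :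
    pot (Mop j 𝒜) < pot 𝒜 := by
  apply pot_union_image
  · intro F hF G hG h
    simp only [Finset.coe_filter, Set.mem_setOf_eq] at hF hG
    exact erase_inj_on hF.2.1 hG.2.1 h
  · rw [Finset.disjoint_left]
    intro P hP hP'
    simp only [Finset.mem_image, Finset.mem_filter] at hP hP'
    obtain ⟨F, hF, rfl⟩ := hP
    exact hF.2.2 hP'.1
  · intro F hF
    simp only [Finset.mem_filter] at hF
    exact wt_erase_lt hF.2.1
  · exact hne

lemma Sop_pot {i j : ℕ} (hij : i < j) {𝒜 : Finset (Finset ℕ)}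
    (hne : (𝒜.filter fun F => j ∈ F ∧ i ∉ F ∧ sft i j F ∉ 𝒜).Nonempty) :
    pot (Sop i j 𝒜) < pot 𝒜 := by
  apply pot_union_image
  · intro F hF G hG h
    simp only [Finset.coe_filter, Set.mem_setOf_eq] at hF hG
    exact sft_inj (Nat.ne_of_lt hij) ⟨hF.2.1, hF.2.2.1⟩ ⟨hG.2.1, hG.2.2.1⟩ h
  · rw [Finset.disjoint_left]
    intro P hP hP'
    simp only [Finset.mem_image, Finset.mem_filter] at hP hP'
    obtain ⟨F, hF, rfl⟩ := hP
    exact hF.2.2.2 hP'.1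
  · intro F hF
    simp only [Finset.mem_filter] at hF
    exact wt_sft_lt hij hF.2.1 hF.2.2.1
  · exact hne

lemma Mop_range {j n : ℕ} {𝒜 : Finset (Finset ℕ)} (h : ∀ F ∈ 𝒜, F ⊆ range n) :
    ∀ P ∈ Mop j 𝒜, P ⊆ range n := by
  intro P hP
  unfold Mop at hP
  simp only [Finset.mem_union, Finset.mem_image, Finset.mem_filter] at hP
  rcases hP with ⟨F, hF, rfl⟩ | hPk
  · exact (Finset.erase_subset j F).trans (h F hF.1)
  · exact h P hPk.1

lemma Sop_range {i j n : ℕ} (hij : i < j) {𝒜 : Finset (Finset ℕ)}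
    (h : ∀ F ∈ 𝒜, F ⊆ range n) : ∀ P ∈ Sop i j 𝒜, P ⊆ range n := by
  intro P hP
  unfold Sop at hP
  simp only [Finset.mem_union, Finset.mem_image, Finset.mem_filter] at hP
  rcases hP with ⟨F, hF, rfl⟩ | hPk
  · unfold sft
    intro x hx
    rcases Finset.mem_insert.mp hx with rfl | hx'
    · have hjn : j ∈ range n := h F hF.1 hF.2.1
      simp only [Finset.mem_range] at hjn ⊢
      omega
    · exact h F hF.1 (Finset.mem_of_mem_erase hx')
  · exact h P hPk.1

/-! ### Existence of a compressed equivalent -/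

def downCl (ℬ : Finset (Finset ℕ)) : Prop := ∀ F ∈ ℬ, ∀ j, F.erase j ∈ ℬ

def leftCmp (ℬ : Finset (Finset ℕ)) : Prop :=
  ∀ F ∈ ℬ, ∀ i j, i < j → j ∈ F → i ∉ F → sft i j F ∈ ℬ

lemma compress_exists (n s : ℕ) (𝒜 : Finset (Finset ℕ))
    (hrange : ∀ F ∈ 𝒜, F ⊆ range n) (hdiam : diamLE s 𝒜) :
    ∃ ℬ : Finset (Finset ℕ), ℬ.card = 𝒜.card ∧ (∀ F ∈ ℬ, F ⊆ range n) ∧ diamLE s ℬ ∧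
      downCl ℬ ∧ leftCmp ℬ := by
  generalize hm : pot 𝒜 = m
  induction m using Nat.strong_induction_on generalizing 𝒜 with
  | _ m ih =>
    by_cases hM : ∃ j, (𝒜.filter fun F => j ∈ F ∧ F.erase j ∉ 𝒜).Nonempty
    · obtain ⟨j, hj⟩ := hM
      have hlt : pot (Mop j 𝒜) < m := hm ▸ Mop_pot hj
      obtain ⟨ℬ, h1, h2, h3, h4, h5⟩ :=
        ih (pot (Mop j 𝒜)) hlt (Mop j 𝒜) (Mop_range hrange) (Mop_diam hdiam) rfl
      exact ⟨ℬ, h1.trans (Mop_card j 𝒜), h2, h3, h4, h5⟩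
    · by_cases hS : ∃ i j, i < j ∧ (𝒜.filter fun F => j ∈ F ∧ i ∉ F ∧ sft i j F ∉ 𝒜).Nonempty
      · obtain ⟨i, j, hij, hne⟩ := hS
        have hlt : pot (Sop i j 𝒜) < m := hm ▸ Sop_pot hij hne
        obtain ⟨ℬ, h1, h2, h3, h4, h5⟩ :=
          ih (pot (Sop i j 𝒜)) hlt (Sop i j 𝒜) (Sop_range hij hrange) (Sop_diam hdiam) rfl
        exact ⟨ℬ, h1.trans (Sop_card (Nat.ne_of_lt hij) 𝒜), h2, h3, h4, h5⟩
      · push_neg at hM hS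
        refine ⟨𝒜, rfl, hrange, hdiam, ?_, ?_⟩
        · intro F hF j
          by_cases hj : j ∈ F
          · by_contra hcon
            have : F ∈ 𝒜.filter fun F => j ∈ F ∧ F.erase j ∉ 𝒜 :=
              Finset.mem_filter.mpr ⟨hF, hj, hcon⟩
            exact Finset.nonempty_iff_ne_empty.mp ⟨F, this⟩ (hM j)
          · rwa [Finset.erase_eq_of_notMem hj]
        · intro F hF i j hij hj hi
          by_contra hcon
          have : F ∈ 𝒜.filter fun F => j ∈ F ∧ i ∉ F ∧ sft i j F ∉ 𝒜 :=
            Finset.mem_filter.mpr ⟨hF, hj, hi, hcon⟩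
          exact Finset.nonempty_iff_ne_empty.mp ⟨F, this⟩ (hS i j hij)

/-! ### The main single-family induction -/

lemma downCl_empty_mem {𝒜 : Finset (Finset ℕ)} (hd : downCl 𝒜) {F : Finset ℕ} (hF : F ∈ 𝒜) :
    ∅ ∈ 𝒜 := by
  generalize hc : F.card = c
  induction c generalizing F with
  | zero =>
      rw [Finset.card_eq_zero] at hc
      rwa [← hc]
  | succ c ih =>
      have hne : F.Nonempty := by
        rw [← Finset.card_pos, hc]; omega
      obtain ⟨x, hx⟩ := hne
      exact ih (hd F hF x) (by rw [Finset.card_erase_of_mem hx, hc]; omega)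

theorem kleitman_main (n : ℕ) : ∀ (a ℓ : ℕ) (𝒜 : Finset (Finset ℕ)),
    (∀ F ∈ 𝒜, F ⊆ range n) → downCl 𝒜 → leftCmp 𝒜 →
    (∀ F ∈ 𝒜, ∀ G ∈ 𝒜, Disjoint F G → F.card + G.card + 2*ℓ ≤ a) →
    𝒜.card ≤ Kb n a ℓ := by
  induction n with
  | zero =>
      intro a ℓ 𝒜 hrange hdown hcmp hcond
      rcases Finset.eq_empty_or_nonempty 𝒜 with rfl | ⟨F, hF⟩
      · simp
      · have hFe : F = ∅ := by
          have := hrange F hF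
          simp only [Finset.range_zero, Finset.subset_empty] at this
          exact this
      -- 𝒜 = {∅}
        have h𝒜 : 𝒜 = {∅} := by
          apply Finset.eq_singleton_iff_unique_mem.mpr
          refine ⟨hFe ▸ hF, fun G hG => ?_⟩
          have := hrange G hG
          simpa using this
        have hc := hcond F hF F hF (by rw [hFe]; simp)
        rw [h𝒜, Kb_trivial (by omega)]
        simp
  | succ n ih =>
      intro a ℓ 𝒜 hrange hdown hcmp hcond
      rcases Finset.eq_empty_or_nonempty 𝒜 with rfl | hne
      · simp
      have hempty : ∅ ∈ 𝒜 := downCl_empty_mem hdown hne.choose_spec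
      have h2la : 2*ℓ ≤ a := by
        have := hcond ∅ hempty ∅ hempty (by simp)
        simpa using this
      -- trivial-peel case
      rcases le_or_gt (2*ℓ + (n+1)) a with htriv | h1
      · rw [Kb_trivial htriv]
        calc 𝒜.card ≤ (Finset.range (n+1)).powerset.card := by
              apply Finset.card_le_card
              intro F hF
              exact Finset.mem_powerset.mpr (hrange F hF)
          _ = 2^(n+1) := by rw [Finset.card_powerset, Finset.card_range]
      rcases eq_or_lt_of_le (show a + 1 ≤ 2*ℓ + (n+1) by omega) with hbd | hsplit
      · -- boundary case : complement pairing
        rw [Kb_boundary (by omega) hbd.symm]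
        have hkey : ∀ F ∈ 𝒜, Finset.range (n+1) \ F ∉ 𝒜 := by
          intro F hF hcon
          have hcard : F.card + (Finset.range (n+1) \ F).card = n+1 := by
            rw [Finset.card_sdiff_of_subset (hrange F hF), Finset.card_range]
            have := Finset.card_le_card (hrange F hF)
            rw [Finset.card_range] at this
            omega
          have := hcond F hF _ hcon (Finset.disjoint_sdiff)
          omega
        have hinj : Set.InjOn (fun F => Finset.range (n+1) \ F) 𝒜 := by
          intro F hF G hG h
          have hF' : Finset.range (n+1) \ (Finset.range (n+1) \ F) = F :=
            Finset.sdiff_sdiff_eq_self (hrange F hF)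
          have hG' : Finset.range (n+1) \ (Finset.range (n+1) \ G) = G :=
            Finset.sdiff_sdiff_eq_self (hrange G hG)
          rw [← hF', ← hG']
          simp only at h
          rw [h]
        have hdisj : Disjoint 𝒜 (𝒜.image fun F => Finset.range (n+1) \ F) := by
          rw [Finset.disjoint_right]
          intro P hP hP'
          simp only [Finset.mem_image] at hP
          obtain ⟨F, hF, rfl⟩ := hP
          exact hkey F hF hP'
        have hsub : 𝒜 ∪ 𝒜.image (fun F => Finset.range (n+1) \ F)
            ⊆ (Finset.range (n+1)).powerset := by
          intro P hP
          rcases Finset.mem_union.mp hP with hP | hP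
          · exact Finset.mem_powerset.mpr (hrange P hP)
          · simp only [Finset.mem_image] at hP
            obtain ⟨F, hF, rfl⟩ := hP
            exact Finset.mem_powerset.mpr (Finset.sdiff_subset)
        have hcards := Finset.card_le_card hsub
        rw [Finset.card_union_of_disjoint hdisj, Finset.card_image_of_injOn hinj,
          Finset.card_powerset, Finset.card_range] at hcards
        have hp : (2:ℕ)^(n+1) = 2*2^n := by ring
        have hq : n+1-1 = n := rfl
        rw [hq]
        omega
      · -- split case : a + 2 ≤ 2ℓ + (n+1)
        set X := 𝒜.filter (fun F => n ∉ F) with hX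
        set Y := (𝒜.filter (fun F => n ∈ F)).image (fun F => F.erase n) with hY
        have memY : ∀ F, F ∈ Y ↔ (n ∉ F ∧ insert n F ∈ 𝒜) := by
          intro F
          constructor
          · intro hF
            simp only [hY, Finset.mem_image, Finset.mem_filter] at hF
            obtain ⟨G, ⟨hG𝒜, hGn⟩, rfl⟩ := hF
            exact ⟨Finset.notMem_erase n G, by rwa [Finset.insert_erase hGn]⟩
          · intro ⟨h1, h2⟩
            simp only [hY, Finset.mem_image, Finset.mem_filter]
            exact ⟨insert n F, ⟨h2, Finset.mem_insert_self n F⟩,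
              by rw [Finset.erase_insert h1]⟩
        have hcardsplit : 𝒜.card = X.card + Y.card := by
          rw [hX, hY, Finset.card_image_of_injOn
            (fun F hF G hG h => by
              simp only [Finset.coe_filter, Set.mem_setOf_eq] at hF hG
              exact erase_inj_on hF.2 hG.2 h)]
          rw [← Finset.card_filter_add_card_filter_not (s := 𝒜) (p := fun F => n ∉ F)]
          have : (𝒜.filter fun F => ¬ n ∉ F) = 𝒜.filter (fun F => n ∈ F) := by
            apply Finset.filter_congr
            intro F _
            simp
          rw [this]
        -- X properties
        have hXrange : ∀ F ∈ X, F ⊆ range n := by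
          intro F hF
          simp only [hX, Finset.mem_filter] at hF
          intro x hx
          have hx' := hrange F hF.1 hx
          simp only [Finset.mem_range] at hx' ⊢
          rcases Nat.lt_succ_iff_lt_or_eq.mp hx' with h | rfl
          · exact h
          · exact absurd hx hF.2
        have hXdown : downCl X := by
          intro F hF j
          simp only [hX, Finset.mem_filter] at hF ⊢
          exact ⟨hdown F hF.1 j, fun hc => hF.2 (Finset.mem_of_mem_erase hc)⟩
        have hXcmp : leftCmp X := by
          intro F hF i j hij hj hi
          simp only [hX, Finset.mem_filter] at hF ⊢
          refine ⟨hcmp F hF.1 i j hij hj hi, ?_⟩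
          intro hc
          unfold sft at hc
          rcases Finset.mem_insert.mp hc with rfl | hc'
          · -- i = n ; but j ∈ F and i < j and F ⊆ range (n+1), n ∉ F
            have hj' := hrange F hF.1 hj
            simp only [Finset.mem_range] at hj'
            omega
          · exact hF.2 (Finset.mem_of_mem_erase hc')
        have hXcond : ∀ F ∈ X, ∀ G ∈ X, Disjoint F G → F.card + G.card + 2*ℓ ≤ a := by
          intro F hF G hG hd'
          simp only [hX, Finset.mem_filter] at hF hG
          exact hcond F hF.1 G hG.1 hd'
        -- Y properties
        have hYrange : ∀ F ∈ Y, F ⊆ range n := by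
          intro F hF
          rw [memY] at hF
          intro x hx
          have hx' := hrange _ hF.2 (Finset.mem_insert_of_mem hx)
          simp only [Finset.mem_range] at hx' ⊢
          rcases Nat.lt_succ_iff_lt_or_eq.mp hx' with h | rfl
          · exact h
          · exact absurd hx hF.1
        have hYdown : downCl Y := by
          intro F hF j
          rw [memY] at hF
          rw [memY]
          by_cases hjn : j = n
          · subst hjn
            rw [Finset.erase_eq_of_notMem hF.1]
            exact hF
          · refine ⟨fun hc => hF.1 (Finset.mem_of_mem_erase hc), ?_⟩
            have : insert n (F.erase j) = (insert n F).erase j := by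
              rw [Finset.erase_insert_of_ne (fun h => hjn h.symm)]
            rw [this]
            exact hdown _ hF.2 j
        have hYcmp : leftCmp Y := by
          intro F hF i j hij hj hi
          rw [memY] at hF
          have hjn : j < n := by
            have := hYrange F ((memY F).mpr hF) hj
            simpa using this
          rw [memY]
          constructor
          · intro hc
            unfold sft at hc
            rcases Finset.mem_insert.mp hc with rfl | hc'
            · omega
            · exact hF.1 (Finset.mem_of_mem_erase hc')
          · have hkey : insert n (sft i j F) = sft i j (insert n F) := by
              unfold sft
              rw [Finset.erase_insert_of_ne (by omega : (n:ℕ) ≠ j), Finset.insert_comm]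
            rw [hkey]
            refine hcmp (insert n F) hF.2 i j hij (Finset.mem_insert_of_mem hj) ?_
            intro hc
            rcases Finset.mem_insert.mp hc with rfl | hc'
            · omega
            · exact hi hc'
        have hYcond : ∀ F ∈ Y, ∀ G ∈ Y, Disjoint F G →
            F.card + G.card + 2*(ℓ+1) ≤ a := by
          intro F hF G hG hd'
          have hFY := hF
          have hGY := hG
          rw [memY] at hF hG
          have hFsub : F ⊆ range n := hYrange F hFY
          have hGsub : G ⊆ range n := hYrange G hGY
          have hFA : F ∈ 𝒜 := by
            have := hdown _ hF.2 n
            rwa [Finset.erase_insert hF.1] at this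
          by_cases hsp : 1 < ((range n) \ (F ∪ G)).card
          · obtain ⟨j₁, j₂, hj₁, hj₂, hjne⟩ := Finset.one_lt_card_iff.mp hsp
            simp only [Finset.mem_sdiff, Finset.mem_union, Finset.mem_range, not_or] at hj₁ hj₂
            have h₁ : insert j₁ F ∈ 𝒜 := by
              have := hcmp (insert n F) hF.2 j₁ n hj₁.1 (Finset.mem_insert_self n F)
                (by
                  intro hc
                  rcases Finset.mem_insert.mp hc with rfl | hc'
                  · omega
                  · exact hj₁.2.1 hc')
              unfold sft at this
              rwa [Finset.erase_insert hF.1] at this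
            have h₂ : insert j₂ G ∈ 𝒜 := by
              have := hcmp (insert n G) hG.2 j₂ n hj₂.1 (Finset.mem_insert_self n G)
                (by
                  intro hc
                  rcases Finset.mem_insert.mp hc with rfl | hc'
                  · omega
                  · exact hj₂.2.2 hc')
              unfold sft at this
              rwa [Finset.erase_insert hG.1] at this
            have hdisj2 : Disjoint (insert j₁ F) (insert j₂ G) := by
              rw [Finset.disjoint_left]
              intro x hx hx'
              rcases Finset.mem_insert.mp hx with rfl | hxF
              · rcases Finset.mem_insert.mp hx' with h | h
                · exact hjne h
                · exact hj₁.2.2 h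
              · rcases Finset.mem_insert.mp hx' with rfl | h
                · exact hj₂.2.1 hxF
                · exact (Finset.disjoint_left.mp hd') hxF h
            have := hcond _ h₁ _ h₂ hdisj2
            rw [Finset.card_insert_of_notMem hj₁.2.1,
              Finset.card_insert_of_notMem hj₂.2.2] at this
            omega
          · -- at most one spare element : contradiction
            have hun : F ∪ G ⊆ range n := Finset.union_subset hFsub hGsub
            have hc1 : ((range n) \ (F ∪ G)).card = n - (F ∪ G).card := by
              rw [Finset.card_sdiff_of_subset hun, Finset.card_range]
            have hc2 : (F ∪ G).card = F.card + G.card :=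
              Finset.card_union_of_disjoint hd'
            have hc3 : (F ∪ G).card ≤ n := by
              have := Finset.card_le_card hun
              rwa [Finset.card_range] at this
            have hdisj3 : Disjoint F (insert n G) := by
              rw [Finset.disjoint_left]
              intro x hx hx'
              rcases Finset.mem_insert.mp hx' with rfl | h
              · exact hF.1 hx
              · exact (Finset.disjoint_left.mp hd') hx h
            have hc4 := hcond F hFA (insert n G) hG.2 hdisj3
            rw [Finset.card_insert_of_notMem hG.1] at hc4
            omega
        have hXle := ih a ℓ X hXrange hXdown hXcmp hXcond
        have hYle := ih a (ℓ+1) Y hYrange hYdown hYcmp hYcond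
        have hpas := Kb_pascal (n := n+1) (a := a) (ℓ := ℓ) (by omega)
        simp only [Nat.add_sub_cancel] at hpas
        omega

/-! ### Translation from the Boolean cube and final theorem -/

def enc {d : ℕ} (x : Fin d → Bool) : Finset ℕ :=
  (Finset.univ.filter fun i => x i = true).map ⟨Fin.val, Fin.val_injective⟩

lemma enc_range {d : ℕ} (x : Fin d → Bool) : enc x ⊆ range d := by
  intro a ha
  simp only [enc, Finset.mem_map, Finset.mem_filter, Function.Embedding.coeFn_mk] at ha
  obtain ⟨i, _, rfl⟩ := ha
  simp only [Finset.mem_range]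
  exact i.isLt

lemma enc_inj {d : ℕ} : Function.Injective (enc (d := d)) := by
  intro x y h
  funext i
  have : ∀ a, a ∈ enc x ↔ a ∈ enc y := fun a => by rw [h]
  have hi := this i.val
  simp only [enc, Finset.mem_map, Finset.mem_filter, Function.Embedding.coeFn_mk] at hi
  cases hx : x i <;> cases hy : y i
  · rfl
  · exfalso
    obtain ⟨a, ⟨-, ha⟩, hav⟩ := hi.mpr ⟨i, ⟨Finset.mem_univ i, hy⟩, rfl⟩
    have : a = i := Fin.val_injective hav
    subst this
    rw [hx] at ha
    exact Bool.false_ne_true ha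
  · exfalso
    obtain ⟨a, ⟨-, ha⟩, hav⟩ := hi.mp ⟨i, ⟨Finset.mem_univ i, hx⟩, rfl⟩
    have : a = i := Fin.val_injective hav
    subst this
    rw [hy] at ha
    exact Bool.false_ne_true ha
  · rfl

lemma enc_dist {d : ℕ} (x y : Fin d → Bool) : hammingDist x y = sdC (enc x) (enc y) := by
  unfold sdC enc
  have h1 : symmDiff ((Finset.univ.filter fun i => x i = true).map ⟨Fin.val, Fin.val_injective⟩)
      ((Finset.univ.filter fun i => y i = true).map ⟨Fin.val, Fin.val_injective⟩)
      = (symmDiff (Finset.univ.filter fun i => x i = true)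
          (Finset.univ.filter fun i => y i = true)).map ⟨Fin.val, Fin.val_injective⟩ := by
    ext a
    simp only [Finset.mem_symmDiff, Finset.mem_map, Finset.mem_filter,
      Function.Embedding.coeFn_mk, Finset.mem_univ, true_and]
    constructor
    · rintro (⟨⟨i, hi, rfl⟩, hni⟩ | ⟨⟨i, hi, rfl⟩, hni⟩)
      · exact ⟨i, Or.inl ⟨hi, fun hc => hni ⟨i, hc, rfl⟩⟩, rfl⟩
      · exact ⟨i, Or.inr ⟨hi, fun hc => hni ⟨i, hc, rfl⟩⟩, rfl⟩
    · rintro ⟨i, hi | hi, rfl⟩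
      · refine Or.inl ⟨⟨i, hi.1, rfl⟩, ?_⟩
        rintro ⟨i', hi', he⟩
        have : i' = i := Fin.val_injective he
        subst this
        exact hi.2 hi'
      · refine Or.inr ⟨⟨i, hi.1, rfl⟩, ?_⟩
        rintro ⟨i', hi', he⟩
        have : i' = i := Fin.val_injective he
        subst this
        exact hi.2 hi'
  rw [h1, Finset.card_map]
  have h2 : symmDiff (Finset.univ.filter fun i => x i = true)
      (Finset.univ.filter fun i => y i = true)
      = Finset.univ.filter fun i => x i ≠ y i := by
    ext i
    simp only [Finset.mem_symmDiff, Finset.mem_filter, Finset.mem_univ, true_and, ne_eq]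
    cases hx : x i <;> cases hy : y i <;> simp
  rw [h2]
  rfl

theorem stmt_4 {d t : ℕ} (A : Finset (Fin d → Bool))
    (hdiam : ∀ x ∈ A, ∀ y ∈ A, hammingDist x y ≤ 2 * t + 1)
    (ht : 2 * t + 1 ≤ d - 1) (hd : 1 ≤ d) :
    A.card ≤ (d - 1).choose t + ∑ i ∈ Finset.range (t + 1), d.choose i := by
  set 𝒜₀ := A.image enc with h𝒜₀
  have hcard0 : 𝒜₀.card = A.card := Finset.card_image_of_injective A enc_inj
  have hrange0 : ∀ F ∈ 𝒜₀, F ⊆ range d := by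
    intro F hF
    simp only [h𝒜₀, Finset.mem_image] at hF
    obtain ⟨x, _, rfl⟩ := hF
    exact enc_range x
  have hdiam0 : diamLE (2*t+1) 𝒜₀ := by
    intro F hF G hG
    simp only [h𝒜₀, Finset.mem_image] at hF hG
    obtain ⟨x, hx, rfl⟩ := hF
    obtain ⟨y, hy, rfl⟩ := hG
    rw [← enc_dist]
    exact hdiam x hx y hy
  obtain ⟨ℬ, hc, hr, hdm, hdown, hcmp⟩ := compress_exists d (2*t+1) 𝒜₀ hrange0 hdiam0
  have hcond : ∀ F ∈ ℬ, ∀ G ∈ ℬ, Disjoint F G → F.card + G.card + 2*0 ≤ 2*t+1 := by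
    intro F hF G hG hd'
    have := hdm F hF G hG
    rw [sdC_disjoint hd'] at this
    omega
  have hmain := kleitman_main d (2*t+1) 0 ℬ hr hdown hcmp hcond
  rw [Kb_final ht hd] at hmain
  omega
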